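/- arXiv:1008.5017 — 3 statements merged into one kernel-verified Lean document; each statement's English description precedes it below -/
import Mathlib

section
/- For X, Y₁, …, Y_m ∈ H and u = [Y₁,[Y₂,[⋯,[Y_{m−1},Y_m]⋯]]] a left-normed iterated bracket in the tensor algebra, the cyclic symmetrization satisfies N(X⊗u) = X⊗u + Σ_{i=1}^m Y_i ⊗ [[Y_{i+1},⋯[Y_{m−1},Y_m]⋯], [⋯[[X,Y₁],Y₂],⋯,Y_{i−1}]]. In particular N maps H⊗L̂ into H⊗L̂, where L̂ is the completed free Lie algebra inside the completed tensor algebra. -/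
/-! Model of the completed tensor algebra `T̂` of `H = ℚ^d`: an element of `T̂`
is a function assigning to each word in the basis letters (elements of `Fin d`)
its coefficient. -/

namespace Paper

/-- words in the basis letters of `H` -/
abbrev Word (d : ℕ) := List (Fin d)

/-- the completed tensor algebra, as coefficient functions on words -/
abbrev Ten (d : ℕ) := Word d → ℚ

variable {d : ℕ}

/-- the unit `1 ∈ T̂` -/
def oneT : Ten d := fun w => if w = [] then 1 else 0

/-- the (concatenation) product of `T̂` -/
def mulT (f g : Ten d) : Ten d :=
  fun w => ∑ k ∈ Finset.range (w.length + 1), f (List.take k w) * g (List.drop k w)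

/-- the commutator bracket `[a,b] = ab - ba` -/
def brT (f g : Ten d) : Ten d := mulT f g - mulT g f

/-- powers -/
def powT (f : Ten d) : ℕ → Ten d
  | 0 => oneT
  | n + 1 => mulT f (powT f n)

/-- the cyclic symmetrization operator `N`, with `N|_{H^{⊗p}} = ∑_{m<p} ν^m`
and `N = 0` in degree `0`. -/
def Nop (f : Ten d) : Ten d := fun w => ∑ m ∈ Finset.range w.length, f (w.rotate m)

/-- the cyclic permutation `ν` -/
def nuT (f : Ten d) : Ten d := fun w => f (w.rotate (w.length - 1))

/-- being an element of `H ⊂ T̂` (homogeneous of degree 1) -/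
def deg1 (f : Ten d) : Prop := ∀ w : Word d, w.length ≠ 1 → f w = 0

/-- the basis letter `i`, as a degree-one element of `T̂` -/
def singT (i : Fin d) : Ten d := fun w => if w = [i] then 1 else 0

/-- the right-normed iterated bracket `[x₁,[x₂,[⋯,[x_{k-1},x_k]⋯]]]` of a list
of elements of `T̂` (a single element for a singleton, `0` for the empty list). -/
def rightBr : List (Ten d) → Ten d
  | [] => 0
  | [x] => x
  | x :: l => brT x (rightBr l)

/-- the left-normed iterated bracket `[⋯[[x,y₁],y₂],⋯,y_k]`. -/
def leftBr (x : Ten d) (l : List (Ten d)) : Ten d := l.foldl brT x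

/-- the right-normed bracket of the letters of a word -/
def PhiWord : Word d → Ten d
  | [] => 0
  | [x] => singT x
  | x :: l => brT (singT x) (PhiWord l)

/-- the degree-`p` truncation (homogeneous part) of an element of `T̂` -/
def truncT (p : ℕ) (f : Ten d) : Ten d := fun w => if w.length = p then f w else 0

/-- the degree-`p` part `𝓛_p` of the free Lie algebra generated by `H` inside
`T̂` (spanned by the right-normed brackets of words of length `p`) -/
def LieN (d p : ℕ) : Submodule ℚ (Ten d) :=
  Submodule.span ℚ {g : Ten d | ∃ w : Word d, w.length = p ∧ g = PhiWord w}

/-- membership in the completed free Lie algebra `𝓛̂ ⊂ T̂`: every homogeneous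
component is a Lie element. -/
def memLhat (f : Ten d) : Prop := ∀ p : ℕ, truncT p f ∈ LieN d p

/-- membership in (the closure of) `H ⊗ 𝓛̂ ⊂ T̂₁`. -/
def memHLhat (f : Ten d) : Prop :=
  ∀ p : ℕ, truncT p f ∈ Submodule.span ℚ
    {g : Ten d | ∃ X v : Ten d, deg1 X ∧ memLhat v ∧ g = mulT X v}

/-- membership in (the closure of) `𝓛̂ ⊗ 𝓛̂ ⊂ T̂`. -/
def memLLhat (f : Ten d) : Prop :=
  ∀ p : ℕ, truncT p f ∈ Submodule.span ℚ
    {g : Ten d | ∃ u v : Ten d, memLhat u ∧ memLhat v ∧ g = mulT u v}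

/-- the bracket map `H ⊗ T̂ → T̂`, `X ⊗ u ↦ [X,u] = Xu - uX`, in coefficients:
the `uX`-part of an element `f = ∑ X ⊗ u_X` of `H ⊗ T̂ = T̂₁` has coefficient
at `w` equal to `f` of the backwards rotation of `w`. -/
def brMap (f : Ten d) : Ten d := fun w => f w - f (w.rotate (w.length - 1))


section Lemmas

variable {d : ℕ}

lemma mulT_apply (f g : Ten d) (w : Word d) :
    mulT f g w = ∑ k ∈ Finset.range (w.length + 1), f (w.take k) * g (w.drop k) := rfl

lemma mulT_add (f g h : Ten d) : mulT f (g + h) = mulT f g + mulT f h := by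
  funext w
  simp [mulT, mul_add, Finset.sum_add_distrib]

lemma add_mulT (f g h : Ten d) : mulT (f + g) h = mulT f h + mulT g h := by
  funext w
  simp [mulT, add_mul, Finset.sum_add_distrib]

lemma mulT_zero (f : Ten d) : mulT f 0 = 0 := by funext w; simp [mulT]

lemma zero_mulT (f : Ten d) : mulT 0 f = 0 := by funext w; simp [mulT]

lemma mulT_neg (f g : Ten d) : mulT f (-g) = -mulT f g := by
  funext w; simp [mulT, Finset.sum_neg_distrib]

lemma neg_mulT (f g : Ten d) : mulT (-f) g = -mulT f g := by
  funext w; simp [mulT, Finset.sum_neg_distrib]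

lemma mulT_sub (f g h : Ten d) : mulT f (g - h) = mulT f g - mulT f h := by
  rw [sub_eq_add_neg, mulT_add, mulT_neg, ← sub_eq_add_neg]

lemma sub_mulT (f g h : Ten d) : mulT (f - g) h = mulT f h - mulT g h := by
  rw [sub_eq_add_neg, add_mulT, neg_mulT, ← sub_eq_add_neg]

lemma mulT_smul (c : ℚ) (f g : Ten d) : mulT f (c • g) = c • mulT f g := by
  funext w
  simp only [mulT, Pi.smul_apply, smul_eq_mul, Finset.mul_sum]
  exact Finset.sum_congr rfl fun k _ => by ring

lemma smul_mulT (c : ℚ) (f g : Ten d) : mulT (c • f) g = c • mulT f g := by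
  funext w
  simp only [mulT, Pi.smul_apply, smul_eq_mul, Finset.mul_sum]
  exact Finset.sum_congr rfl fun k _ => by ring

lemma mulT_oneT (f : Ten d) : mulT f oneT = f := by
  funext w
  rw [mulT_apply]
  rw [Finset.sum_eq_single w.length]
  · simp [oneT]
  · intro k hk hne
    have hk' : k < w.length := by
      have := Finset.mem_range.1 hk; omega
    have : w.drop k ≠ [] := by
      simp [List.drop_eq_nil_iff]; omega
    simp [oneT, this]
  · intro h; exact absurd (Finset.self_mem_range_succ _) h

lemma oneT_mulT (f : Ten d) : mulT oneT f = f := by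
  funext w
  rw [mulT_apply]
  rw [Finset.sum_eq_single 0]
  · simp [oneT]
  · intro k hk hne
    have : w.take k ≠ [] := by
      simp [List.take_eq_nil_iff]
      constructor
      · omega
      · intro h; subst h; simp at hk; omega
    simp [oneT, this]
  · intro h; simp at h

end Lemmas
section Lemmas2

variable {d : ℕ}

lemma mulT_assoc (f g h : Ten d) : mulT (mulT f g) h = mulT f (mulT g h) := by
  funext w
  set n := w.length with hn
  have L1 : mulT (mulT f g) h w
      = ∑ k ∈ Finset.range (n+1), ∑ j ∈ Finset.range (k+1),
          f (w.take j) * (g (List.take (k - j) (w.drop j)) * h (w.drop k)) := by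
    rw [mulT_apply]
    refine Finset.sum_congr rfl fun k hk => ?_
    have hkn : k ≤ n := by have := Finset.mem_range.1 hk; omega
    rw [mulT_apply, List.length_take, min_eq_left (by omega : k ≤ w.length), Finset.sum_mul]
    refine Finset.sum_congr rfl fun j hj => ?_
    have hjk : j ≤ k := by have := Finset.mem_range.1 hj; omega
    rw [List.take_take, min_eq_left hjk, List.drop_take]
    ring
  have L2 : mulT f (mulT g h) w
      = ∑ j ∈ Finset.range (n+1), ∑ t ∈ Finset.range (n - j + 1),
          f (w.take j) * (g (List.take t (w.drop j)) * h (w.drop (j + t))) := by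
    rw [mulT_apply]
    refine Finset.sum_congr rfl fun j hj => ?_
    rw [mulT_apply, List.length_drop, Finset.mul_sum, ← hn]
    refine Finset.sum_congr rfl fun t _ => ?_
    rw [List.drop_drop]
  rw [L1, L2, Finset.sum_sigma', Finset.sum_sigma']
  refine Finset.sum_nbij' (fun p => ⟨p.2, p.1 - p.2⟩) (fun p => ⟨p.1 + p.2, p.1⟩) ?_ ?_ ?_ ?_ ?_
  · rintro ⟨k, j⟩ hp
    simp only [Finset.mem_sigma, Finset.mem_range] at hp ⊢
    omega
  · rintro ⟨j, t⟩ hp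
    simp only [Finset.mem_sigma, Finset.mem_range] at hp ⊢
    omega
  · rintro ⟨k, j⟩ hp
    simp only [Finset.mem_sigma, Finset.mem_range] at hp
    have h1 : j + (k - j) = k := by omega
    simp [h1]
  · rintro ⟨j, t⟩ hp
    simp only [Finset.mem_sigma, Finset.mem_range] at hp
    have h1 : j + t - j = t := by omega
    simp [h1]
  · rintro ⟨k, j⟩ hp
    simp only [Finset.mem_sigma, Finset.mem_range] at hp
    have h1 : j + (k - j) = k := by omega
    simp [h1]

lemma Nop_apply (f : Ten d) (w : Word d) :
    Nop f w = ∑ m ∈ Finset.range w.length, f (w.rotate m) := rfl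

lemma Nop_add (f g : Ten d) : Nop (f + g) = Nop f + Nop g := by
  funext w; simp [Nop, Finset.sum_add_distrib]

lemma Nop_sub (f g : Ten d) : Nop (f - g) = Nop f - Nop g := by
  funext w; simp [Nop, Finset.sum_sub_distrib]

lemma Nop_zero : Nop (0 : Ten d) = 0 := by funext w; simp [Nop]

lemma Nop_smul (c : ℚ) (f : Ten d) : Nop (c • f) = c • Nop f := by
  funext w; simp [Nop, Finset.mul_sum]

lemma Nop_mulT_comm (f g : Ten d) : Nop (mulT f g) = Nop (mulT g f) := by
  funext w
  set n := w.length with hn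
  rcases Nat.eq_zero_or_pos n with h0 | hpos
  · simp [Nop_apply, ← hn, h0]
  have key : ∀ m k : ℕ, m < n → k ≤ n →
      w.rotate ((m + k) % n) = List.drop k (w.rotate m) ++ List.take k (w.rotate m) := by
    intro m k hm hk
    have hlen : (w.rotate m).length = n := by rw [List.length_rotate]
    have h2 : w.rotate ((m + k) % n) = (w.rotate m).rotate k := by
      rw [List.rotate_rotate, hn]
      exact List.rotate_mod w (m+k)
    rw [h2]
    exact List.rotate_eq_drop_append_take (by omega)
  have expand : ∀ h1 h2 : Ten d, Nop (mulT h1 h2) w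
      = ∑ m ∈ Finset.range n, ∑ k ∈ Finset.range (n+1),
          h1 (List.take k (w.rotate m)) * h2 (List.drop k (w.rotate m)) := by
    intro h1 h2
    rw [Nop_apply, ← hn]
    refine Finset.sum_congr rfl fun m hm => ?_
    rw [mulT_apply, List.length_rotate, ← hn]
  rw [expand, expand, Finset.sum_sigma', Finset.sum_sigma']
  refine Finset.sum_nbij' (fun p => ⟨(p.1 + p.2) % n, n - p.2⟩)
    (fun p => ⟨(p.1 + p.2) % n, n - p.2⟩) ?_ ?_ ?_ ?_ ?_
  · rintro ⟨m, k⟩ hp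
    simp only [Finset.mem_sigma, Finset.mem_range] at hp ⊢
    exact ⟨Nat.mod_lt _ hpos, by omega⟩
  · rintro ⟨m, k⟩ hp
    simp only [Finset.mem_sigma, Finset.mem_range] at hp ⊢
    exact ⟨Nat.mod_lt _ hpos, by omega⟩
  · rintro ⟨m, k⟩ hp
    simp only [Finset.mem_sigma, Finset.mem_range] at hp
    have e1 : ((m + k) % n + (n - k)) % n = m := by
      rw [Nat.mod_add_mod]
      have : m + k + (n - k) = m + n := by omega
      rw [this, Nat.add_mod_right, Nat.mod_eq_of_lt hp.1]
    have e2 : n - (n - k) = k := by omega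
    simp [e1, e2]
  · rintro ⟨m, k⟩ hp
    simp only [Finset.mem_sigma, Finset.mem_range] at hp
    have e1 : ((m + k) % n + (n - k)) % n = m := by
      rw [Nat.mod_add_mod]
      have : m + k + (n - k) = m + n := by omega
      rw [this, Nat.add_mod_right, Nat.mod_eq_of_lt hp.1]
    have e2 : n - (n - k) = k := by omega
    simp [e1, e2]
  · rintro ⟨m, k⟩ hp
    simp only [Finset.mem_sigma, Finset.mem_range] at hp
    obtain ⟨hm, hk⟩ := hp
    have hkn : k ≤ n := by omega
    have hrw := key m k hm hkn
    have hlen : (w.rotate m).length = n := List.length_rotate w m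
    have hdl : (List.drop k (w.rotate m)).length = n - k := by rw [List.length_drop, hlen]
    rw [hrw, List.take_left' hdl, List.drop_left' hdl]
    ring

end Lemmas2
section Lemmas3

variable {d : ℕ}

/-- product of a list of tensors -/
def prodT : List (Ten d) → Ten d
  | [] => oneT
  | x :: A => mulT x (prodT A)

lemma prodT_append (A B : List (Ten d)) : prodT (A ++ B) = mulT (prodT A) (prodT B) := by
  induction A with
  | nil => simp [prodT, oneT_mulT]
  | cons x A ih => simp [prodT, ih, mulT_assoc]

lemma prodT_concat (A : List (Ten d)) (y : Ten d) :
    prodT (A ++ [y]) = mulT (prodT A) y := by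
  rw [prodT_append]
  show mulT (prodT A) (mulT y oneT) = _
  rw [mulT_oneT]

/-- scalar word value -/
def prodW (A : List (Ten d)) (w : Word d) : ℚ :=
  (List.zipWith (fun f c => f [c]) A w).prod

lemma prodT_eval (A : List (Ten d)) (hA : ∀ x ∈ A, deg1 x) (w : Word d) :
    prodT A w = if w.length = A.length then prodW A w else 0 := by
  induction A generalizing w with
  | nil =>
    cases w with
    | nil => simp [prodT, oneT, prodW]
    | cons c w' => simp [prodT, oneT, prodW]
  | cons x A ih =>
    have hx : deg1 x := hA x (by simp)
    have hA' : ∀ y ∈ A, deg1 y := fun y hy => hA y (by simp [hy])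
    cases w with
    | nil =>
      have : prodT (x :: A) [] = 0 := by
        show mulT x (prodT A) [] = 0
        rw [mulT_apply]
        simp only [List.length_nil]
        rw [Finset.sum_range_one]
        simp [hx [] (by simp)]
      rw [this]
      simp
    | cons c w' =>
      show mulT x (prodT A) (c :: w') = _
      rw [mulT_apply]
      rw [Finset.sum_eq_single 1]
      · rw [ih hA' _]
        simp only [List.take, List.drop]
        by_cases h : w'.length = A.length
        · simp [h, prodW, List.length_cons, prodW]
        · have : ¬ (c :: w').length = (x :: A).length := by simp [h]
          simp [h, this]
      · intro k hk hne
        have hk' : k ≤ w'.length + 1 := by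
          have := Finset.mem_range.1 hk; simpa [List.length_cons] using Nat.lt_succ_iff.1 this
        have : (List.take k (c :: w')).length = k := by
          rw [List.length_take]; simp [List.length_cons]; omega
        rw [hx _ (by rw [this]; exact hne)]
        ring
      · intro h
        exfalso
        apply h
        simp [List.length_cons]
    
lemma prodW_rotate (A : List (Ten d)) (w : Word d) (j : ℕ) (h : A.length = w.length) :
    prodW (A.rotate j) (w.rotate j) = prodW A w := by
  unfold prodW
  rw [← List.zipWith_rotate_distrib _ A w j h]
  -- prod of rotated list of rationals
  set l := List.zipWith (fun f c => f [c]) A w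
  rw [← List.rotate_mod]
  rcases Nat.eq_zero_or_pos l.length with h0 | hpos
  · rw [List.length_eq_zero_iff.1 h0]; simp
  have hle : j % l.length ≤ l.length := le_of_lt (Nat.mod_lt _ hpos)
  rw [List.rotate_eq_drop_append_take hle, List.prod_append, mul_comm, ← List.prod_append,
    List.take_append_drop]

lemma prodT_rotate_eval (A : List (Ten d)) (hA : ∀ x ∈ A, deg1 x) (w : Word d)
    (hlen : w.length = A.length) (m : ℕ) (hm : m ≤ A.length) :
    prodT A (w.rotate m) = prodT (A.rotate (A.length - m)) w := by
  have hA' : ∀ x ∈ A.rotate (A.length - m), deg1 x := by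
    intro x hx; exact hA x ((List.mem_rotate).1 hx)
  rw [prodT_eval A hA, prodT_eval _ hA']
  rw [List.length_rotate, List.length_rotate]
  simp only [hlen, if_pos rfl]
  have hw : w = (w.rotate m).rotate (A.length - m) := by
    rw [List.rotate_rotate]
    have : m + (A.length - m) = w.length := by omega
    rw [this, List.rotate_length]
  conv_rhs => rw [hw]
  rw [prodW_rotate]
  rw [List.length_rotate, hlen]

lemma Nop_prodT (A : List (Ten d)) (hA : ∀ x ∈ A, deg1 x) :
    Nop (prodT A) = ∑ k ∈ Finset.range A.length, prodT (A.rotate k) := by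
  funext w
  rw [Nop_apply]
  have happ : (∑ k ∈ Finset.range A.length, prodT (A.rotate k)) w
      = ∑ k ∈ Finset.range A.length, prodT (A.rotate k) w := by
    simp [Finset.sum_apply]
  rw [happ]
  by_cases hlen : w.length = A.length
  · rw [hlen]
    refine Finset.sum_nbij' (fun m => if m = 0 then 0 else A.length - m)
      (fun k => if k = 0 then 0 else A.length - k) ?_ ?_ ?_ ?_ ?_
      <;> intro m hm <;> simp only [Finset.mem_range] at hm ⊢
    · split <;> omega
    · split <;> omega
    · rcases Nat.eq_zero_or_pos m with h0 | h1
      · simp [h0]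
      · have h2 : ¬ A.length - m = 0 := by omega
        simp only [if_neg (by omega : ¬ m = 0), if_neg h2]
        omega
    · rcases Nat.eq_zero_or_pos m with h0 | h1
      · simp [h0]
      · have h2 : ¬ A.length - m = 0 := by omega
        simp only [if_neg (by omega : ¬ m = 0), if_neg h2]
        omega
    · rcases Nat.eq_zero_or_pos m with h0 | h1
      · simp [h0]
      · rw [if_neg (by omega)]
        exact prodT_rotate_eval A hA w hlen m (by omega)
  · rw [Finset.sum_eq_zero, Finset.sum_eq_zero]
    · intro k _
      show prodT (A.rotate k) w = 0
      rw [prodT_eval _ (fun x hx => hA x ((List.mem_rotate).1 hx)),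
        if_neg (by rw [List.length_rotate]; exact hlen)]
    · intro m _
      rw [prodT_eval A hA, if_neg (by rw [List.length_rotate]; exact hlen)]

end Lemmas3
section Lemmas4

variable {d : ℕ}

lemma brT_def (f g : Ten d) : brT f g = mulT f g - mulT g f := rfl

lemma rightBr_cons (x : Ten d) (l : List (Ten d)) (hl : l ≠ []) :
    rightBr (x :: l) = brT x (rightBr l) := by
  cases l with
  | nil => exact absurd rfl hl
  | cons y l' => rfl

lemma leftBr_nil (x : Ten d) : leftBr x [] = x := rfl

lemma leftBr_cons (x y : Ten d) (l : List (Ten d)) :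
    leftBr x (y :: l) = leftBr (brT x y) l := rfl

lemma brT_sub_left (f g h : Ten d) : brT (f - g) h = brT f h - brT g h := by
  simp only [brT_def, sub_mulT, mulT_sub]
  abel

lemma brT_sub_right (f g h : Ten d) : brT f (g - h) = brT f g - brT f h := by
  simp only [brT_def, sub_mulT, mulT_sub]
  abel

lemma leftBr_sub (x y : Ten d) (l : List (Ten d)) :
    leftBr (x - y) l = leftBr x l - leftBr y l := by
  induction l generalizing x y with
  | nil => simp [leftBr_nil]
  | cons z l ih => rw [leftBr_cons, leftBr_cons, leftBr_cons, brT_sub_left, ih]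

/-- partial cyclic symmetrization term -/
def CtermT (A : List (Ten d)) (u : Ten d) : Ten d :=
  ∑ j ∈ Finset.range A.length, mulT (mulT (prodT (A.drop j)) u) (prodT (A.take j))

lemma Cstep (A : List (Ten d)) (Y u' : Ten d) :
    CtermT (A ++ [Y]) u' - CtermT (Y :: A) u'
      = CtermT A (brT Y u') + mulT Y (brT u' (prodT A)) := by
  unfold CtermT
  have hlen1 : (A ++ [Y]).length = A.length + 1 := by simp
  have hlen2 : (Y :: A).length = A.length + 1 := by simp
  rw [hlen1, hlen2, Finset.sum_range_succ, Finset.sum_range_succ']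
  have e3 : ∀ j ∈ Finset.range A.length,
      mulT (mulT (prodT (List.drop j (A ++ [Y]))) u') (prodT (List.take j (A ++ [Y])))
      = mulT (mulT (mulT (prodT (A.drop j)) Y) u') (prodT (A.take j)) := by
    intro j hj
    have hjA : j ≤ A.length := le_of_lt (Finset.mem_range.1 hj)
    rw [List.drop_append_of_le_length hjA, List.take_append_of_le_length hjA, prodT_concat]
  have e4 : ∀ j, j ∈ Finset.range A.length →
      mulT (mulT (prodT (List.drop (j+1) (Y :: A))) u') (prodT (List.take (j+1) (Y :: A)))
      = mulT (mulT (prodT (A.drop j)) u') (mulT Y (prodT (A.take j))) := by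
    intro j _
    rfl
  have e5 : ∀ j ∈ Finset.range A.length,
      mulT (mulT (prodT (List.drop j A)) (brT Y u')) (prodT (List.take j A))
      = mulT (mulT (mulT (prodT (A.drop j)) Y) u') (prodT (A.take j))
        - mulT (mulT (prodT (A.drop j)) u') (mulT Y (prodT (A.take j))) := by
    intro j _
    simp only [brT_def, mulT_sub, sub_mulT, mulT_assoc]
  rw [Finset.sum_congr rfl e3, Finset.sum_congr rfl e4, Finset.sum_congr rfl e5,
    Finset.sum_sub_distrib]
  have e9 : prodT [Y] = Y := mulT_oneT Y
  have eq_q : List.drop A.length (A ++ [Y]) = [Y] := List.drop_left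
  have eq_q2 : List.take A.length (A ++ [Y]) = A := List.take_left
  rw [eq_q, eq_q2, e9]
  have eq_0 : mulT (mulT (prodT (List.drop 0 (Y :: A))) u') (prodT (List.take 0 (Y :: A)))
      = mulT (mulT (mulT Y (prodT A)) u') oneT := rfl
  rw [eq_0, mulT_oneT, brT_def, mulT_sub]
  simp only [mulT_assoc]
  abel

/-- the generalized key lemma -/
lemma lemG : ∀ (L : List (Ten d)), L ≠ [] → (∀ x ∈ L, deg1 x) →
    ∀ (A : List (Ten d)), A ≠ [] → (∀ x ∈ A, deg1 x) →
    Nop (mulT (prodT A) (rightBr L)) = CtermT A (rightBr L) +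
      ∑ i ∈ Finset.range L.length,
        mulT (L.getD i 0)
          (if i + 1 = L.length then leftBr (prodT A) (L.take i)
           else brT (rightBr (L.drop (i + 1))) (leftBr (prodT A) (L.take i))) := by
  intro L
  induction L with
  | nil => intro h; exact absurd rfl h
  | cons Y L' IH =>
    intro _ hLd A hA hAd
    rcases L' with _ | ⟨Z, L''⟩
    · -- base case L = [Y]
      have hY : deg1 Y := hLd Y (by simp)
      have hAY : ∀ x ∈ A ++ [Y], deg1 x := by
        intro x hx
        rcases List.mem_append.1 hx with h | h
        · exact hAd x h
        · simp at h; subst h; exact hY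
      have h1 : mulT (prodT A) (rightBr [Y]) = prodT (A ++ [Y]) := by
        rw [prodT_concat]; rfl
      rw [h1, Nop_prodT _ hAY]
      have hlen1 : (A ++ [Y]).length = A.length + 1 := by simp
      rw [hlen1, Finset.sum_range_succ]
      have e0 : ∀ k ∈ Finset.range A.length,
          prodT ((A ++ [Y]).rotate k)
          = mulT (mulT (prodT (A.drop k)) (rightBr [Y])) (prodT (A.take k)) := by
        intro k hk
        have hkA : k ≤ A.length := le_of_lt (Finset.mem_range.1 hk)
        have hk' : k ≤ (A ++ [Y]).length := by rw [hlen1]; omega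
        rw [List.rotate_eq_drop_append_take hk']
        rw [List.drop_append_of_le_length hkA, List.take_append_of_le_length hkA]
        rw [prodT_append, prodT_concat]
        rfl
      rw [Finset.sum_congr rfl e0]
      have eA : (A ++ [Y]).rotate A.length = Y :: A := by
        have h2 : A.length ≤ (A ++ [Y]).length := by rw [hlen1]; omega
        rw [List.rotate_eq_drop_append_take h2, List.drop_left, List.take_left]
        rfl
      rw [eA]
      show _ = CtermT A (rightBr [Y]) + ∑ i ∈ Finset.range 1, _
      rw [Finset.sum_range_one]
      have hc : (0 + 1 = [Y].length) := by simp
      rw [if_pos hc]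
      rfl
    · -- inductive step, L = Y :: Z :: L''
      set Lt := Z :: L'' with hLt
      have hLtne : Lt ≠ [] := by simp [hLt]
      have hY : deg1 Y := hLd Y (by simp)
      have hLtd : ∀ x ∈ Lt, deg1 x := fun x hx => hLd x (by simp [hLt] at hx ⊢; tauto)
      have hbr : rightBr (Y :: Lt) = brT Y (rightBr Lt) := rightBr_cons Y Lt hLtne
      have hL1 : mulT (prodT A) (rightBr (Y :: Lt))
          = mulT (mulT (prodT A) Y) (rightBr Lt) - mulT (mulT (prodT A) (rightBr Lt)) Y := by
        rw [hbr, brT_def, mulT_sub, mulT_assoc, mulT_assoc]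
      have hcyc : Nop (mulT (mulT (prodT A) (rightBr Lt)) Y)
          = Nop (mulT (mulT Y (prodT A)) (rightBr Lt)) := by
        rw [Nop_mulT_comm, mulT_assoc]
      have hIH1 := IH hLtne hLtd (A ++ [Y]) (by simp) (by
        intro x hx
        rcases List.mem_append.1 hx with h | h
        · exact hAd x h
        · simp at h; subst h; exact hY)
      have hIH2 := IH hLtne hLtd (Y :: A) (by simp) (by
        intro x hx
        rcases List.mem_cons.1 hx with h | h
        · subst h; exact hY
        · exact hAd x h)
      rw [prodT_concat] at hIH1
      have e6 : prodT (Y :: A) = mulT Y (prodT A) := rfl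
      rw [e6] at hIH2
      rw [hL1, Nop_sub, hcyc, hIH1, hIH2, add_sub_add_comm, Cstep]
      have comb : ∀ i ∈ Finset.range Lt.length,
          mulT (Lt.getD i 0)
            (if i + 1 = Lt.length then leftBr (mulT (prodT A) Y) (Lt.take i)
             else brT (rightBr (Lt.drop (i + 1))) (leftBr (mulT (prodT A) Y) (Lt.take i)))
          - mulT (Lt.getD i 0)
            (if i + 1 = Lt.length then leftBr (mulT Y (prodT A)) (Lt.take i)
             else brT (rightBr (Lt.drop (i + 1))) (leftBr (mulT Y (prodT A)) (Lt.take i)))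
          = mulT ((Y :: Lt).getD (i+1) 0)
            (if i + 1 + 1 = Lt.length + 1 then leftBr (prodT A) ((Y :: Lt).take (i+1))
             else brT (rightBr ((Y :: Lt).drop (i + 1 + 1)))
               (leftBr (prodT A) ((Y :: Lt).take (i+1)))) := by
        intro i hi
        have egetD : (Y :: Lt).getD (i+1) 0 = Lt.getD i 0 := rfl
        have etake : (Y :: Lt).take (i+1) = Y :: Lt.take i := rfl
        have edrop : (Y :: Lt).drop (i + 1 + 1) = Lt.drop (i+1) := rfl
        have elb : ∀ l, leftBr (mulT (prodT A) Y) l - leftBr (mulT Y (prodT A)) l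
            = leftBr (prodT A) (Y :: l) := by
          intro l
          rw [leftBr_cons, brT_def, leftBr_sub]
        rw [egetD, etake, edrop]
        by_cases hc : i + 1 = Lt.length
        · rw [if_pos hc, if_pos hc, if_pos (by omega : i + 1 + 1 = Lt.length + 1),
            ← mulT_sub, elb]
        · rw [if_neg hc, if_neg hc, if_neg (by omega : ¬ i + 1 + 1 = Lt.length + 1),
            ← mulT_sub, ← brT_sub_right, elb]
      rw [← Finset.sum_sub_distrib, Finset.sum_congr rfl comb, hbr]
      simp only [List.length_cons]
      rw [Finset.sum_range_succ']
      have h00 : ¬ (0 + 1 = Lt.length + 1) := by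
        simp only [hLt, List.length_cons]; omega
      rw [if_neg h00]
      have hbody0 : mulT ((Y :: Lt).getD 0 0)
          (brT (rightBr ((Y :: Lt).drop (0 + 1))) (leftBr (prodT A) ((Y :: Lt).take 0)))
          = mulT Y (brT (rightBr Lt) (prodT A)) := rfl
      rw [hbody0]
      abel

end Lemmas4
section Lemmas5

variable {d : ℕ}

lemma part1 (X : Ten d) (hX : deg1 X) (L : List (Ten d)) (hL : L ≠ [])
    (hLd : ∀ x ∈ L, deg1 x) :
    Nop (mulT X (rightBr L)) = mulT X (rightBr L) +
      ∑ i ∈ Finset.range L.length,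
        mulT (L.getD i 0)
          (if i + 1 = L.length then leftBr X (L.take i)
           else brT (rightBr (L.drop (i + 1))) (leftBr X (L.take i))) := by
  have h := lemG L hL hLd [X] (by simp) (by
    intro x hx
    rcases List.mem_singleton.1 hx with rfl
    exact hX)
  have e9 : prodT [X] = X := mulT_oneT X
  rw [e9] at h
  have eC : CtermT [X] (rightBr L) = mulT X (rightBr L) := by
    unfold CtermT
    rw [(by simp : ([X] : List (Ten d)).length = 1), Finset.sum_range_one]
    show mulT (mulT (prodT [X]) (rightBr L)) (prodT ([] : List (Ten d))) = _
    rw [e9]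
    exact mulT_oneT _
  rw [eC] at h
  exact h

end Lemmas5
section Lemmas6

variable {d : ℕ}

lemma truncT_add (p : ℕ) (f g : Ten d) : truncT p (f + g) = truncT p f + truncT p g := by
  funext w; by_cases h : w.length = p <;> simp [truncT, h]

lemma truncT_smul (p : ℕ) (c : ℚ) (f : Ten d) : truncT p (c • f) = c • truncT p f := by
  funext w; by_cases h : w.length = p <;> simp [truncT, h]

lemma truncT_zero (p : ℕ) : truncT p (0 : Ten d) = 0 := by
  funext w; by_cases h : w.length = p <;> simp [truncT, h]

lemma truncT_idem (p : ℕ) (f : Ten d) : truncT p (truncT p f) = truncT p f := by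
  funext w; by_cases h : w.length = p <;> simp [truncT, h]

lemma Nop_truncT (p : ℕ) (f : Ten d) : truncT p (Nop f) = Nop (truncT p f) := by
  funext w
  by_cases h : w.length = p
  · simp [truncT, Nop_apply, List.length_rotate, h]
  · simp [truncT, Nop_apply, List.length_rotate, h]

lemma truncT_self {p : ℕ} {g : Ten d} (h : ∀ v : Word d, v.length ≠ p → g v = 0) :
    truncT p g = g := by
  funext w
  by_cases hw : w.length = p
  · simp [truncT, hw]
  · simp [truncT, hw, h w hw]

lemma truncT_other {p q : ℕ} {g : Ten d} (h : ∀ v : Word d, v.length ≠ p → g v = 0)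
    (hq : q ≠ p) : truncT q g = 0 := by
  funext w
  by_cases hw : w.length = q
  · simp [truncT, hw]
    exact h w (by omega)
  · simp [truncT, hw]

lemma mulT_homog {p q : ℕ} {f g : Ten d} (hf : ∀ v : Word d, v.length ≠ p → f v = 0)
    (hg : ∀ v : Word d, v.length ≠ q → g v = 0) :
    ∀ v : Word d, v.length ≠ p + q → mulT f g v = 0 := by
  intro v hv
  rw [mulT_apply]
  apply Finset.sum_eq_zero
  intro k hk
  have hk' : k ≤ v.length := by have := Finset.mem_range.1 hk; omega
  by_cases h1 : (v.take k).length = p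
  · have h2 : (v.drop k).length ≠ q := by
      rw [List.length_drop]
      rw [List.length_take] at h1
      omega
    rw [hg _ h2, mul_zero]
  · rw [hf _ h1, zero_mul]

lemma brT_homog {p q : ℕ} {f g : Ten d} (hf : ∀ v : Word d, v.length ≠ p → f v = 0)
    (hg : ∀ v : Word d, v.length ≠ q → g v = 0) :
    ∀ v : Word d, v.length ≠ p + q → brT f g v = 0 := by
  intro v hv
  have h1 := mulT_homog hf hg v hv
  have h2 := mulT_homog hg hf v (by omega)
  show mulT f g v - mulT g f v = 0
  rw [h1, h2, sub_zero]

lemma singT_homog (i : Fin d) : ∀ v : Word d, v.length ≠ 1 → singT i v = 0 := by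
  intro v hv
  have : v ≠ [i] := by intro h; subst h; simp at hv
  simp [singT, this]

lemma singT_deg1 (i : Fin d) : deg1 (singT i) := singT_homog i

lemma PhiWord_cons (x : Fin d) (l : Word d) (hl : l ≠ []) :
    PhiWord (x :: l) = brT (singT x) (PhiWord l) := by
  cases l with
  | nil => exact absurd rfl hl
  | cons y l' => rfl

lemma PhiWord_homog : ∀ w : Word d, ∀ v : Word d, v.length ≠ w.length → PhiWord w v = 0 := by
  intro w
  induction w with
  | nil => intro v hv; rfl
  | cons x l ih =>
    cases l with
    | nil =>
      intro v hv
      exact singT_homog x v (by simpa using hv)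
    | cons y l' =>
      intro v hv
      rw [PhiWord_cons x (y :: l') (by simp)]
      have := brT_homog (singT_homog x) ih v
        (by simp only [List.length_cons] at hv ⊢; omega)
      simpa using this

lemma LieN_homog {p : ℕ} {g : Ten d} (h : g ∈ LieN d p) :
    ∀ v : Word d, v.length ≠ p → g v = 0 := by
  induction h using Submodule.span_induction with
  | mem x hx =>
    obtain ⟨w, hw, rfl⟩ := hx
    intro v hv
    exact PhiWord_homog w v (by omega)
  | zero => intro v _; rfl
  | add x y hx hy ihx ihy =>
    intro v hv
    show x v + y v = 0
    rw [ihx v hv, ihy v hv, add_zero]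
  | smul c x hx ihx =>
    intro v hv
    show c * x v = 0
    rw [ihx v hv, mul_zero]

lemma memLhat_of_LieN {p : ℕ} {g : Ten d} (h : g ∈ LieN d p) : memLhat g := by
  intro q
  by_cases hq : q = p
  · subst hq
    rw [truncT_self (LieN_homog h)]
    exact h
  · rw [truncT_other (LieN_homog h) hq]
    exact Submodule.zero_mem _

lemma brT_zero_left (g : Ten d) : brT 0 g = 0 := by
  show mulT 0 g - mulT g 0 = 0
  rw [zero_mulT, mulT_zero, sub_zero]

lemma brT_zero_right (g : Ten d) : brT g 0 = 0 := by
  show mulT g 0 - mulT 0 g = 0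
  rw [zero_mulT, mulT_zero, sub_zero]

lemma brT_add_left (f g h : Ten d) : brT (f + g) h = brT f h + brT g h := by
  simp only [brT_def, add_mulT, mulT_add]; abel

lemma brT_add_right (f g h : Ten d) : brT f (g + h) = brT f g + brT f h := by
  simp only [brT_def, add_mulT, mulT_add]; abel

lemma brT_smul_left (c : ℚ) (f g : Ten d) : brT (c • f) g = c • brT f g := by
  simp only [brT_def, smul_mulT, mulT_smul, smul_sub]

lemma brT_smul_right (c : ℚ) (f g : Ten d) : brT f (c • g) = c • brT f g := by
  simp only [brT_def, smul_mulT, mulT_smul, smul_sub]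

lemma leibniz (x y z : Ten d) : brT (brT x y) z = brT x (brT y z) - brT y (brT x z) := by
  simp only [brT_def, mulT_sub, sub_mulT, mulT_assoc]
  abel

lemma singT_mem (i : Fin d) : singT i ∈ LieN d 1 :=
  Submodule.subset_span ⟨[i], rfl, rfl⟩

lemma PhiWord_mem (w : Word d) : PhiWord w ∈ LieN d w.length :=
  Submodule.subset_span ⟨w, rfl, rfl⟩

lemma brT_singT_LieN (x : Fin d) {p : ℕ} {u : Ten d} (hu : u ∈ LieN d p) :
    brT (singT x) u ∈ LieN d (p + 1) := by
  induction hu using Submodule.span_induction with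
  | mem g hg =>
    obtain ⟨w, hw, rfl⟩ := hg
    cases w with
    | nil =>
      show brT (singT x) (PhiWord []) ∈ _
      show brT (singT x) 0 ∈ _
      rw [brT_zero_right]
      exact Submodule.zero_mem _
    | cons y l =>
      rw [← PhiWord_cons x (y :: l) (by simp)]
      have := PhiWord_mem (x :: y :: l)
      have hlen : (x :: y :: l).length = p + 1 := by
        simp only [List.length_cons] at hw ⊢; omega
      rwa [hlen] at this
  | zero => rw [brT_zero_right]; exact Submodule.zero_mem _
  | add a b _ _ iha ihb => rw [brT_add_right]; exact Submodule.add_mem _ iha ihb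
  | smul c a _ iha => rw [brT_smul_right]; exact Submodule.smul_mem _ _ iha

lemma brPhi : ∀ w : Word d, ∀ w' : Word d,
    brT (PhiWord w) (PhiWord w') ∈ LieN d (w.length + w'.length) := by
  intro w
  induction w with
  | nil =>
    intro w'
    show brT 0 _ ∈ _
    rw [brT_zero_left]
    exact Submodule.zero_mem _
  | cons x l ih =>
    intro w'
    cases l with
    | nil =>
      show brT (singT x) (PhiWord w') ∈ _
      have := brT_singT_LieN x (PhiWord_mem w')
      have hlen : w'.length + 1 = ([x] : Word d).length + w'.length := by simp; omega
      rwa [hlen] at this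
    | cons y l' =>
      cases w' with
      | nil =>
        show brT _ 0 ∈ _
        rw [brT_zero_right]
        exact Submodule.zero_mem _
      | cons z w'' =>
        rw [PhiWord_cons x (y :: l') (by simp), leibniz]
        apply Submodule.sub_mem
        · have h1 := ih (z :: w'')
          have h2 := brT_singT_LieN x h1
          have hlen : (y :: l').length + (z :: w'').length + 1
              = (x :: y :: l').length + (z :: w'').length := by
            simp only [List.length_cons]; omega
          rwa [hlen] at h2
        · rw [← PhiWord_cons x (z :: w'') (by simp)]
          have h1 := ih (x :: z :: w'')
          have hlen : (y :: l').length + (x :: z :: w'').length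
              = (x :: y :: l').length + (z :: w'').length := by
            simp only [List.length_cons]; omega
          rwa [hlen] at h1

lemma brT_LieN {p q : ℕ} {u v : Ten d} (hu : u ∈ LieN d p) (hv : v ∈ LieN d q) :
    brT u v ∈ LieN d (p + q) := by
  induction hu using Submodule.span_induction with
  | mem g hg =>
    obtain ⟨w, hw, rfl⟩ := hg
    induction hv using Submodule.span_induction with
    | mem g' hg' =>
      obtain ⟨w', hw', rfl⟩ := hg'
      have := brPhi w w'
      rwa [hw, hw'] at this
    | zero => rw [brT_zero_right]; exact Submodule.zero_mem _
    | add a b _ _ iha ihb => rw [brT_add_right]; exact Submodule.add_mem _ iha ihb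
    | smul c a _ iha => rw [brT_smul_right]; exact Submodule.smul_mem _ _ iha
  | zero => rw [brT_zero_left]; exact Submodule.zero_mem _
  | add a b _ _ iha ihb => rw [brT_add_left]; exact Submodule.add_mem _ iha ihb
  | smul c a _ iha => rw [brT_smul_left]; exact Submodule.smul_mem _ _ iha

lemma deg1_LieN1 {X : Ten d} (hX : deg1 X) : X ∈ LieN d 1 := by
  have hrep : X = ∑ i ∈ Finset.univ, X [i] • singT i := by
    funext w
    have happ : (∑ i ∈ Finset.univ, X [i] • singT i) w
        = ∑ i ∈ Finset.univ, X [i] * singT i w := by simp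
    rw [happ]
    match w with
    | [] =>
      rw [hX [] (by simp)]
      symm
      apply Finset.sum_eq_zero
      intro i _
      simp [singT]
    | [c] =>
      rw [Finset.sum_eq_single c]
      · simp [singT]
      · intro i _ hne
        have : ([c] : Word d) ≠ [i] := by
          intro h
          injection h with h1 _
          exact hne h1.symm
        simp [singT, this]
      · intro h; simp at h
    | c :: c' :: w' =>
      rw [hX _ (by simp)]
      symm
      apply Finset.sum_eq_zero
      intro i _
      have : (c :: c' :: w' : Word d) ≠ [i] := by simp
      simp [singT, this]
  rw [hrep]
  exact Submodule.sum_mem _ fun i _ => Submodule.smul_mem _ _ (singT_mem i)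

lemma leftBr_LieN : ∀ (l : List (Ten d)), (∀ y ∈ l, deg1 y) →
    ∀ (x : Ten d) (r : ℕ), x ∈ LieN d r → leftBr x l ∈ LieN d (r + l.length) := by
  intro l
  induction l with
  | nil => intro _ x r hx; simpa [leftBr_nil] using hx
  | cons y l ih =>
    intro hld x r hx
    rw [leftBr_cons]
    have hy : y ∈ LieN d 1 := deg1_LieN1 (hld y (by simp))
    have hxy : brT x y ∈ LieN d (r + 1) := brT_LieN hx hy
    have := ih (fun z hz => hld z (by simp [hz])) (brT x y) (r + 1) hxy
    have hlen : r + 1 + l.length = r + (y :: l).length := by simp; omega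
    rwa [hlen] at this

lemma rightBr_map : ∀ w : Word d, w ≠ [] → rightBr (w.map singT) = PhiWord w := by
  intro w
  induction w with
  | nil => intro h; exact absurd rfl h
  | cons x l ih =>
    intro _
    cases l with
    | nil => rfl
    | cons y l' =>
      have h1 : (y :: l').map singT ≠ [] := by simp
      show rightBr (singT x :: (y :: l').map singT) = _
      rw [rightBr_cons _ _ h1, ih (by simp), PhiWord_cons x (y :: l') (by simp)]

end Lemmas6
section Lemmas7

variable {d : ℕ}

lemma mulT_deg1_nil {X : Ten d} (hX : deg1 X) (v : Ten d) : mulT X v [] = 0 := by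
  rw [mulT_apply]
  simp only [List.length_nil]
  rw [Finset.sum_range_one]
  simp [hX [] (by simp)]

lemma mulT_deg1_cons {X : Ten d} (hX : deg1 X) (v : Ten d) (c : Fin d) (w' : Word d) :
    mulT X v (c :: w') = X [c] * v w' := by
  rw [mulT_apply]
  rw [Finset.sum_eq_single 1]
  · rfl
  · intro k hk hne
    have hk' : k ≤ w'.length + 1 := by
      have := Finset.mem_range.1 hk
      simpa [List.length_cons] using Nat.lt_succ_iff.1 this
    have hlen : (List.take k (c :: w')).length = k := by
      rw [List.length_take]; simp [List.length_cons]; omega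
    rw [hX _ (by rw [hlen]; exact hne), zero_mul]
  · intro h
    exfalso
    apply h
    simp [List.length_cons]

lemma truncT0_mulT {X : Ten d} (hX : deg1 X) (v : Ten d) : truncT 0 (mulT X v) = 0 := by
  funext w
  cases w with
  | nil => simp [truncT, mulT_deg1_nil hX]
  | cons c w' => simp [truncT]

lemma truncT_succ_mulT {X : Ten d} (hX : deg1 X) (v : Ten d) (p : ℕ) :
    truncT (p + 1) (mulT X v) = mulT X (truncT p v) := by
  funext w
  cases w with
  | nil =>
    have h1 : truncT (p+1) (mulT X v) [] = 0 := by simp [truncT]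
    rw [h1, mulT_deg1_nil hX]
  | cons c w' =>
    rw [mulT_deg1_cons hX _ c w']
    by_cases h : w'.length = p
    · simp [truncT, mulT_deg1_cons hX, h]
    · have h2 : ¬ (c :: w').length = p + 1 := by simp [List.length_cons]; omega
      simp [truncT, mulT_deg1_cons hX, h, h2]

lemma claimA (X : Ten d) (hX : deg1 X) {q : ℕ} {u : Ten d} (hu : u ∈ LieN d q) :
    Nop (mulT X u) ∈ Submodule.span ℚ
      {g : Ten d | ∃ X v : Ten d, deg1 X ∧ memLhat v ∧ g = mulT X v} := by
  induction hu using Submodule.span_induction with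
  | mem g hg =>
    obtain ⟨w, hw, rfl⟩ := hg
    cases w with
    | nil =>
      show Nop (mulT X 0) ∈ _
      rw [mulT_zero, Nop_zero]
      exact Submodule.zero_mem _
    | cons x l =>
      set w := x :: l with hwdef
      have hwne : w ≠ [] := by simp [hwdef]
      set L := w.map singT with hLdef
      have hLne : L ≠ [] := by simp [hLdef, hwdef]
      have hLd : ∀ y ∈ L, deg1 y := by
        intro y hy
        rw [hLdef, List.mem_map] at hy
        obtain ⟨i, _, rfl⟩ := hy
        exact singT_deg1 i
      have hrB : rightBr L = PhiWord w := rightBr_map w hwne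
      rw [← hrB, part1 X hX L hLne hLd]
      apply Submodule.add_mem
      · exact Submodule.subset_span
          ⟨X, rightBr L, hX, by rw [hrB]; exact memLhat_of_LieN (PhiWord_mem w), rfl⟩
      · apply Submodule.sum_mem
        intro i hi
        have hiL : i < L.length := Finset.mem_range.1 hi
        have hiw : i < w.length := by
          rwa [hLdef, List.length_map] at hiL
        have hgetD : L.getD i 0 = singT (w[i]'hiw) := by
          rw [List.getD_eq_getElem _ _ hiL]
          exact List.getElem_map singT
        have hdeg : deg1 (L.getD i 0) := by rw [hgetD]; exact singT_deg1 _
        have htake : L.take i = (w.take i).map singT := by rw [hLdef, List.map_take]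
        have htaked : ∀ y ∈ L.take i, deg1 y := fun y hy => hLd y (List.take_subset i L hy)
        have hlb : leftBr X (L.take i) ∈ LieN d (1 + (L.take i).length) :=
          leftBr_LieN (L.take i) htaked X 1 (deg1_LieN1 hX)
        by_cases hc : i + 1 = L.length
        · rw [if_pos hc]
          exact Submodule.subset_span
            ⟨L.getD i 0, leftBr X (L.take i), hdeg, memLhat_of_LieN hlb, rfl⟩
        · rw [if_neg hc]
          have hdropne : w.drop (i + 1) ≠ [] := by
            have : w.length = L.length := by rw [hLdef, List.length_map]
            intro hnil
            rw [List.drop_eq_nil_iff] at hnil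
            omega
          have hdrop : L.drop (i + 1) = (w.drop (i + 1)).map singT := by
            rw [hLdef, List.map_drop]
          have hrBd : rightBr (L.drop (i + 1)) = PhiWord (w.drop (i + 1)) := by
            rw [hdrop]
            exact rightBr_map _ hdropne
          have hbr : brT (rightBr (L.drop (i + 1))) (leftBr X (L.take i))
              ∈ LieN d ((w.drop (i + 1)).length + (1 + (L.take i).length)) := by
            rw [hrBd]
            exact brT_LieN (PhiWord_mem _) hlb
          exact Submodule.subset_span
            ⟨L.getD i 0, _, hdeg, memLhat_of_LieN hbr, rfl⟩
  | zero =>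
    rw [mulT_zero, Nop_zero]
    exact Submodule.zero_mem _
  | add a b _ _ iha ihb =>
    rw [mulT_add, Nop_add]
    exact Submodule.add_mem _ iha ihb
  | smul c a _ iha =>
    rw [mulT_smul, Nop_smul]
    exact Submodule.smul_mem _ _ iha

lemma part2 : ∀ f : Ten d, memHLhat f → memHLhat (Nop f) := by
  intro f hf p
  rw [Nop_truncT]
  have key : ∀ g : Ten d, g ∈ Submodule.span ℚ
      {g : Ten d | ∃ X v : Ten d, deg1 X ∧ memLhat v ∧ g = mulT X v} →
      Nop (truncT p g) ∈ Submodule.span ℚ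
      {g : Ten d | ∃ X v : Ten d, deg1 X ∧ memLhat v ∧ g = mulT X v} := by
    intro g hg
    induction hg using Submodule.span_induction with
    | mem g hgm =>
      obtain ⟨X, v, hX, hv, rfl⟩ := hgm
      cases p with
      | zero =>
        rw [truncT0_mulT hX, Nop_zero]
        exact Submodule.zero_mem _
      | succ p' =>
        rw [truncT_succ_mulT hX]
        exact claimA X hX (hv p')
    | zero =>
      rw [truncT_zero, Nop_zero]
      exact Submodule.zero_mem _
    | add a b _ _ iha ihb =>
      rw [truncT_add, Nop_add]
      exact Submodule.add_mem _ iha ihb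
    | smul c a _ iha =>
      rw [truncT_smul, Nop_smul]
      exact Submodule.smul_mem _ _ iha
  have h2 := key (truncT p f) (hf p)
  rwa [truncT_idem] at h2

end Lemmas7

/-- For `X, Y₁, …, Y_m ∈ H` and
`u = [Y₁,[Y₂,[⋯,[Y_{m-1},Y_m]⋯]]]` the cyclic symmetrization satisfies
`N(X⊗u) = X⊗u + ∑_{i=1}^m Y_i ⊗ [[Y_{i+1},⋯[Y_{m-1},Y_m]⋯],[⋯[[X,Y₁],Y₂],⋯,Y_{i-1}]]`
(with the convention that for `i = m` the outer bracket degenerates to its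
second entry `[⋯[[X,Y₁],Y₂],⋯,Y_{m-1}]`).  In particular `N` maps `H ⊗ 𝓛̂`
into `H ⊗ 𝓛̂`. -/
theorem Nop_H_tensor_bracket (d : ℕ) (X : Ten d) (hX : deg1 X)
    (L : List (Ten d)) (hL : L ≠ []) (hLd : ∀ x ∈ L, deg1 x) :
    (Nop (mulT X (rightBr L)) = mulT X (rightBr L) +
      ∑ i ∈ Finset.range L.length,
        mulT (L.getD i 0)
          (if i + 1 = L.length then leftBr X (L.take i)
           else brT (rightBr (L.drop (i + 1))) (leftBr X (L.take i)))) ∧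
    (∀ f : Ten d, memHLhat f → memHLhat (Nop f)) := by
  exact ⟨part1 X hX L hL hLd, part2⟩

end Paper
end

section
/- Let H be a symplectic Q-vector space of dimension 2g with symplectic basis A₁,B₁,…,A_g,B_g and ω = Σᵢ (AᵢBᵢ − BᵢAᵢ) in H^{⊗2}. Under the identification of derivations of the completed tensor algebra with H⊗T̂ via Poincaré duality, the Lie algebra of derivations killing ω equals the kernel of the bracket map H⊗T̂ → T̂, which equals N(T̂₁). -/
/-! Model of the completed tensor algebra `T̂` of `H = ℚ^d`: an element of `T̂`
is a function assigning to each word in the basis letters (elements of `Fin d`)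
its coefficient. -/

namespace Paper

variable {d : ℕ}

/-- the intersection (symplectic) pairing on the basis of `H = ℚ^{2g}`:
`(A_i · B_i) = 1`, `(B_i · A_i) = -1`, all other pairings `0`, where
`A_i, B_i` are the letters `2i, 2i+1`. -/
def pairC {g : ℕ} (a b : Fin (2 * g)) : ℚ :=
  if a.val % 2 = 0 ∧ b.val = a.val + 1 then 1
  else if b.val % 2 = 0 ∧ a.val = b.val + 1 then -1 else 0

/-- the symplectic form `ω = ∑ A_i B_i - B_i A_i ∈ H^{⊗2}` -/
def omegaT (g : ℕ) : Ten (2 * g) :=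
  fun w => ∑ a : Fin (2 * g), ∑ b : Fin (2 * g),
    pairC a b * (if w = [a, b] then 1 else 0)

/-- the value on the basis letter `b` of the derivation associated to
`f ∈ H ⊗ T̂` via Poincaré duality `X ⊗ u ↦ (Y ↦ (Y·X)u)` -/
def phiD {g : ℕ} (f : Ten (2 * g)) (b : Fin (2 * g)) : Ten (2 * g) :=
  fun m => ∑ c : Fin (2 * g), pairC b c * f (c :: m)

/-- the derivation of `T̂` associated to `f ∈ H ⊗ T̂` via Poincaré duality,
extended to all of `T̂` by the Leibniz rule. -/
def derOf {g : ℕ} (f t : Ten (2 * g)) : Ten (2 * g) :=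
  fun w => ∑ i ∈ Finset.range (w.length + 1), ∑ j ∈ Finset.Icc i w.length,
    ∑ b : Fin (2 * g), t (w.take i ++ b :: w.drop j) * phiD f b ((w.take j).drop i)

/-- the intersection pairing of two elements of `H` -/
def pairT {g : ℕ} (u v : Ten (2 * g)) : ℚ :=
  ∑ a : Fin (2 * g), ∑ b : Fin (2 * g), u [a] * v [b] * pairC a b

/-- the product of a list of elements of `T̂` -/
def prodL : List (Ten d) → Ten d
  | [] => oneT
  | x :: l => mulT x (prodL l)

def partner {g : ℕ} (x : Fin (2*g)) : Fin (2*g) :=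
  ⟨if x.val % 2 = 0 then x.val + 1 else x.val - 1, by have := x.2; split_ifs with h <;> omega⟩

def sgn {g : ℕ} (x : Fin (2*g)) : ℚ := if x.val % 2 = 0 then 1 else -1

lemma pairC_eq {g : ℕ} (x b : Fin (2*g)) :
    pairC x b = if b = partner x then sgn x else 0 := by
  have hx := x.2
  unfold pairC partner sgn
  simp only [Fin.eq_mk_iff_val_eq]
  split_ifs
  any_goals rfl
  all_goals exfalso
  all_goals omega

lemma pairC_eq' {g : ℕ} (x b : Fin (2*g)) :
    pairC b x = if b = partner x then - sgn x else 0 := by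
  have hx := x.2; have hb := b.2
  unfold pairC partner sgn
  simp only [Fin.eq_mk_iff_val_eq]
  split_ifs
  any_goals norm_num
  all_goals exfalso
  all_goals omega

lemma partner_partner {g : ℕ} (x : Fin (2*g)) : partner (partner x) = x := by
  have hx := x.2
  unfold partner
  simp only [Fin.ext_iff]
  split_ifs
  all_goals omega

lemma sgn_mul_self {g : ℕ} (x : Fin (2*g)) : sgn x * sgn x = 1 := by
  unfold sgn; split_ifs <;> norm_num

lemma sumJJ_left {g : ℕ} (x y : Fin (2*g)) :
    ∑ b : Fin (2*g), pairC b x * pairC b y = if x = y then 1 else 0 := by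
  simp only [pairC_eq']
  rw [Finset.sum_eq_single (partner x)]
  · rw [if_pos rfl]
    rcases eq_or_ne x y with rfl | hxy
    · rw [if_pos rfl, if_pos rfl, neg_mul_neg, sgn_mul_self]
    · rw [if_neg hxy, if_neg (fun hc => hxy (by
        have := congrArg partner hc; rwa [partner_partner, partner_partner] at this)), mul_zero]
  · intro b _ hb; rw [if_neg hb, zero_mul]
  · intro hb; exact absurd (Finset.mem_univ _) hb

lemma sumJJ_mid {g : ℕ} (x y : Fin (2*g)) :
    ∑ b : Fin (2*g), pairC x b * pairC b y = -(if x = y then 1 else 0) := by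
  have h : ∀ b : Fin (2*g), pairC x b = - pairC b x := by
    intro b; rw [pairC_eq, pairC_eq']; split_ifs <;> ring
  calc ∑ b : Fin (2*g), pairC x b * pairC b y
      = - ∑ b : Fin (2*g), pairC b x * pairC b y := by
        rw [← Finset.sum_neg_distrib]; exact Finset.sum_congr rfl (fun b _ => by rw [h b]; ring)
    _ = -(if x = y then 1 else 0) := by rw [sumJJ_left]


lemma omegaT_pair {g : ℕ} (x y : Fin (2*g)) : omegaT g [x, y] = pairC x y := by
  unfold omegaT
  have h : ∀ a b : Fin (2*g), (if ([x,y] : Word (2*g)) = [a,b] then (1:ℚ) else 0)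
      = if a = x then (if b = y then 1 else 0) else 0 := by
    intro a b
    split_ifs with h1 h2 h3 <;> simp_all
  simp only [h, mul_ite, mul_one, mul_zero]
  rw [Finset.sum_eq_single x (fun a _ ha => Finset.sum_eq_zero fun b _ => by rw [if_neg ha])
    (fun hx => absurd (Finset.mem_univ x) hx)]
  rw [Finset.sum_eq_single y (fun b _ hb => by rw [if_pos rfl, if_neg hb])
    (fun hy => absurd (Finset.mem_univ y) hy)]
  rw [if_pos rfl, if_pos rfl]

lemma omegaT_len {g : ℕ} (u : Word (2*g)) (h : u.length ≠ 2) : omegaT g u = 0 := by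
  unfold omegaT
  refine Finset.sum_eq_zero fun a _ => Finset.sum_eq_zero fun b _ => ?_
  rw [if_neg, mul_zero]
  intro hu; rw [hu] at h; simp at h


lemma contract_mid {g : ℕ} (f : Ten (2*g)) (a : Fin (2*g)) (t : Word (2*g)) :
    ∑ b : Fin (2*g), pairC a b * phiD f b t = - f (a :: t) := by
  unfold phiD
  calc ∑ b : Fin (2*g), pairC a b * ∑ c : Fin (2*g), pairC b c * f (c::t)
      = ∑ b : Fin (2*g), ∑ c : Fin (2*g), pairC a b * pairC b c * f (c::t) := by
        refine Finset.sum_congr rfl fun b _ => ?_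
        rw [Finset.mul_sum]; exact Finset.sum_congr rfl fun c _ => by ring
    _ = ∑ c : Fin (2*g), ∑ b : Fin (2*g), pairC a b * pairC b c * f (c::t) :=
        by rw [Finset.sum_comm]
    _ = ∑ c : Fin (2*g), (∑ b : Fin (2*g), pairC a b * pairC b c) * f (c::t) := by
        refine Finset.sum_congr rfl fun c _ => ?_; rw [Finset.sum_mul]
    _ = ∑ c : Fin (2*g), (-(if a = c then 1 else 0)) * f (c::t) :=
        Finset.sum_congr rfl fun c _ => by rw [sumJJ_mid]
    _ = - f (a :: t) := by
        simp [ite_mul, Finset.sum_ite_eq]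

lemma contract_left {g : ℕ} (f : Ten (2*g)) (x : Fin (2*g)) (t : Word (2*g)) :
    ∑ b : Fin (2*g), pairC b x * phiD f b t = f (x :: t) := by
  unfold phiD
  calc ∑ b : Fin (2*g), pairC b x * ∑ c : Fin (2*g), pairC b c * f (c::t)
      = ∑ b : Fin (2*g), ∑ c : Fin (2*g), pairC b x * pairC b c * f (c::t) := by
        refine Finset.sum_congr rfl fun b _ => ?_
        rw [Finset.mul_sum]; exact Finset.sum_congr rfl fun c _ => by ring
    _ = ∑ c : Fin (2*g), ∑ b : Fin (2*g), pairC b x * pairC b c * f (c::t) :=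
        by rw [Finset.sum_comm]
    _ = ∑ c : Fin (2*g), (∑ b : Fin (2*g), pairC b x * pairC b c) * f (c::t) := by
        refine Finset.sum_congr rfl fun c _ => ?_; rw [Finset.sum_mul]
    _ = ∑ c : Fin (2*g), (if x = c then 1 else 0) * f (c::t) :=
        Finset.sum_congr rfl fun c _ => by rw [sumJJ_left]
    _ = f (x :: t) := by
        simp [ite_mul, Finset.sum_ite_eq]

lemma derOf_omega {g : ℕ} (f : Ten (2*g)) (w : Word (2*g)) :
    derOf f (omegaT g) w = f (w.rotate (w.length - 1)) - f w := by
  rcases w with _ | ⟨a, l⟩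
  · have h1 : ∀ b : Fin (2*g), omegaT g [b] = 0 := fun b => omegaT_len _ (by simp)
    simp [derOf, h1]
  · set n := l.length + 1 with hn
    have hlen : (a :: l).length = n := by simp [hn]
    -- the generic summand
    set U : ℕ → ℕ → ℚ := fun i j =>
      ∑ b : Fin (2*g), omegaT g ((a::l).take i ++ b :: (a::l).drop j)
        * phiD f b (((a::l).take j).drop i) with hU
    have hder : derOf f (omegaT g) (a :: l)
        = ∑ i ∈ Finset.range (n+1), ∑ j ∈ Finset.Icc i n, U i j := by
      simp [derOf, hlen]
      rfl
    have key : ∀ i j, i ≤ n → j ≤ n → i + 1 + (n - j) ≠ 2 → U i j = 0 := by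
      intro i j hi hj hne
      refine Finset.sum_eq_zero fun b _ => ?_
      rw [omegaT_len, zero_mul]
      simp only [List.length_append, List.length_take, List.length_cons, List.length_drop, hlen]
      omega
    rw [hder, Finset.sum_range_succ']
    have hn2 : n = l.length + 1 := hn
    rw [hn2, Finset.sum_range_succ']
    have hzero : (∑ i ∈ Finset.range l.length,
        ∑ j ∈ Finset.Icc (i + 1 + 1) n, U (i + 1 + 1) j) = 0 := by
      refine Finset.sum_eq_zero fun i hi => Finset.sum_eq_zero fun j hj => ?_
      rw [Finset.mem_Icc] at hj
      exact key _ _ (by rw [Finset.mem_range] at hi; omega) hj.2 (by omega)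
    rw [hzero]
    have hT1 : (∑ j ∈ Finset.Icc (0+1) n, U (0+1) j) = U 1 n := by
      refine Finset.sum_eq_single_of_mem n (by rw [Finset.mem_Icc]; omega) fun j hj hjn => ?_
      rw [Finset.mem_Icc] at hj
      exact key _ _ (by omega) hj.2 (by omega)
    have hT0 : (∑ j ∈ Finset.Icc 0 n, U 0 j) = U 0 l.length := by
      refine Finset.sum_eq_single_of_mem l.length (by rw [Finset.mem_Icc]; omega) fun j hj hjn => ?_
      rw [Finset.mem_Icc] at hj
      exact key _ _ (by omega) hj.2 (by omega)
    rw [hT1, hT0]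
    -- evaluate U 1 n
    have hU1 : U 1 n = - f (a :: l) := by
      rw [hU]
      have e1 : (a :: l).take 1 = [a] := rfl
      have e2 : (a :: l).drop n = [] := by rw [← hlen]; exact List.drop_length
      have e3 : ((a :: l).take n).drop 1 = l := by rw [← hlen, List.take_length]; rfl
      simp only [e1, e2, e3]
      have e4 : ∀ b : Fin (2*g), omegaT g ([a] ++ b :: []) = pairC a b := fun b => omegaT_pair a b
      simp only [e4]
      exact contract_mid f a l
    -- evaluate U 0 l.length
    have hU0 : U 0 l.length = f ((a :: l).rotate (n - 1)) := by
      rw [hU]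
      have hd : ((a :: l).drop l.length).length = 1 := by
        rw [List.length_drop, hlen]; omega
      obtain ⟨x, hx⟩ := List.length_eq_one_iff.mp hd
      have e1 : (a :: l).take 0 = [] := rfl
      have e2 : ((a :: l).take l.length).drop 0 = (a :: l).take l.length := List.drop_zero
      simp only [e1, e2, hx, List.nil_append]
      have e4 : ∀ b : Fin (2*g), omegaT g (b :: [x]) = pairC b x := fun b => omegaT_pair b x
      simp only [e4]
      rw [contract_left f x ((a :: l).take l.length)]
      have hrot : (a :: l).rotate (n - 1) = x :: (a :: l).take l.length := by
        rw [List.rotate_eq_drop_append_take (by rw [hlen]; omega : n - 1 ≤ (a :: l).length)]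
        have : n - 1 = l.length := by omega
        rw [this, hx]; rfl
      rw [hrot]
    rw [hU1, hU0, hlen]
    ring

-- part 2 lemmas
lemma rot1_inv (f : Ten d) (hb : brMap f = 0) (v : Word d) : f (v.rotate 1) = f v := by
  have H : ∀ u : Word d, f u - f (u.rotate (u.length - 1)) = 0 := fun u => congrFun hb u
  rcases v with _ | ⟨a, l⟩
  · simp
  · have h1 := H ((a :: l).rotate 1)
    rw [List.rotate_rotate, List.length_rotate] at h1
    simp only [List.length_cons] at h1
    have : 1 + (l.length + 1 - 1) = (a :: l).length := by simp; omega
    rw [this, List.rotate_length] at h1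
    linarith

lemma rot_inv (f : Ten d) (hb : brMap f = 0) (m : ℕ) (v : Word d) : f (v.rotate m) = f v := by
  induction m with
  | zero => simp
  | succ k ih => rw [← List.rotate_rotate, rot1_inv f hb, ih]

lemma Nop_rot1 (h : Ten d) (v : Word d) : Nop h (v.rotate 1) = Nop h v := by
  unfold Nop
  rw [List.length_rotate]
  have : ∀ m, h ((v.rotate 1).rotate m) = h (v.rotate (m+1)) := by
    intro m; rw [List.rotate_rotate]; ring_nf
  simp only [this]
  rcases Nat.eq_zero_or_pos v.length with h0 | h0
  · simp [h0]
  · obtain ⟨n, hn⟩ : ∃ n, v.length = n + 1 := ⟨v.length - 1, by omega⟩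
    rw [hn, Finset.sum_range_succ, Finset.sum_range_succ']
    have : v.rotate (n + 1) = v.rotate 0 := by rw [← hn]; simp [List.rotate_length]
    rw [this]
    try ring

lemma Nop_rot (h : Ten d) (m : ℕ) (v : Word d) : Nop h (v.rotate m) = Nop h v := by
  induction m with
  | zero => simp
  | succ k ih => rw [← List.rotate_rotate, Nop_rot1, ih]


/-- For a symplectic vector space `H` of dimension `2g` with
symplectic form `ω = ∑ A_i B_i - B_i A_i`, under the identification of
derivations of `T̂` with `H ⊗ T̂` via Poincaré duality, the Lie algebra of
derivations killing `ω` equals the kernel of the bracket map `H ⊗ T̂ → T̂`,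
which equals `N(T̂₁)`. -/
theorem symplectic_derivations_eq_Nop_image (g : ℕ) (f : Ten (2 * g))
    (hf : f [] = 0) :
    (derOf f (omegaT g) = 0 ↔ brMap f = 0) ∧
    (brMap f = 0 ↔ ∃ h : Ten (2 * g), h [] = 0 ∧ Nop h = f) := by
  constructor
  · constructor
    · intro h0
      funext w
      have hw := congrFun h0 w
      rw [derOf_omega] at hw
      show f w - f (w.rotate (w.length - 1)) = 0
      have : (0 : Ten (2*g)) w = 0 := rfl
      rw [this] at hw
      linarith
    · intro h0
      funext w
      have hw := congrFun h0 w
      show derOf f (omegaT g) w = 0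
      rw [derOf_omega]
      have : (0 : Ten (2*g)) w = 0 := rfl
      rw [this] at hw
      have hw' : f w - f (w.rotate (w.length - 1)) = 0 := hw
      linarith
  · constructor
    · intro hb
      refine ⟨fun w => f w / w.length, by simp [hf], ?_⟩
      funext w
      unfold Nop
      rcases Nat.eq_zero_or_pos w.length with h0 | h0
      · rw [List.length_eq_zero_iff.mp h0] at *; simp [hf]
      · have : ∀ m, f (w.rotate m) / ((w.rotate m).length : ℚ) = f w / w.length := by
          intro m; rw [List.length_rotate, rot_inv f hb]
        simp only [this, Finset.sum_const, Finset.card_range, nsmul_eq_mul]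
        field_simp
    · rintro ⟨h, hh0, rfl⟩
      funext w
      show Nop h w - Nop h (w.rotate (w.length - 1)) = 0
      rw [Nop_rot]
      ring

end Paper
end

section
/- In a symplectic vector space H, the kernel of the bracket map H⊗L₂ → L₃, X⊗u ↦ [X,u] (where L_k is the degree-k part of the free Lie algebra on H), equals Λ³H embedded in H⊗L₂ = H⊗Λ²H. -/
/-! Model of the completed tensor algebra `T̂` of `H = ℚ^d`: an element of `T̂`
is a function assigning to each word in the basis letters (elements of `Fin d`)
its coefficient. -/

namespace Paper

variable {d : ℕ}

/-- The kernel of the bracket map `H ⊗ 𝓛₂ → 𝓛₃`,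
`X ⊗ u ↦ [X,u]`, equals `Λ³H` embedded in `H ⊗ Λ²H = H ⊗ 𝓛₂ ⊂ H^{⊗3}`.
Here `H ⊗ 𝓛₂` consists of the degree-3 tensors antisymmetric in the last two
slots, and (the image of) `Λ³H` consists of the fully antisymmetric degree-3
tensors. -/
theorem ker_bracket_eq_lambda3 (d : ℕ) :
    {f : Ten d | (∀ w : Word d, w.length ≠ 3 → f w = 0) ∧
      (∀ a b c : Fin d, f [a, b, c] = - f [a, c, b]) ∧ brMap f = 0}
    = {f : Ten d | (∀ w : Word d, w.length ≠ 3 → f w = 0) ∧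
      (∀ a b c : Fin d, f [a, b, c] = - f [a, c, b]) ∧
      (∀ a b c : Fin d, f [a, b, c] = - f [b, a, c])} := by
  have hrot : ∀ a b c : Fin d, ([a,b,c] : Word d).rotate 2 = [c,a,b] := by
    intro a b c; simp [List.rotate]
  ext f
  simp only [Set.mem_setOf_eq]
  constructor
  · rintro ⟨h0, h1, h2⟩
    have hcyc : ∀ a b c : Fin d, f [a, b, c] = f [c, a, b] := by
      intro a b c
      have := congrFun h2 [a, b, c]
      simp only [brMap, List.length_cons, List.length_nil, hrot, Pi.zero_apply] at this
      linarith
    refine ⟨h0, h1, fun a b c => ?_⟩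
    calc f [a, b, c] = f [c, a, b] := hcyc a b c
      _ = - f [c, b, a] := h1 c a b
      _ = - f [b, a, c] := by rw [hcyc b a c]
  · rintro ⟨h0, h1, h3⟩
    refine ⟨h0, h1, ?_⟩
    funext w
    have hlen : ∀ n, (w.rotate n).length = w.length := fun n => List.length_rotate w n
    match w with
    | [a, b, c] =>
        simp only [brMap, List.length_cons, List.length_nil, hrot, Pi.zero_apply]
        have : f [c, a, b] = f [a, b, c] := by
          rw [h3 c a b, h1 a c b]; ring_nf
        rw [this]; ring
    | [] => simp [brMap, h0 [] (by simp)]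
    | [a] => simp [brMap, h0 [a] (by simp)]
    | [a, b] =>
        have h := h0 ([a,b].rotate 1) (by rw [hlen]; simp)
        simp [brMap, h0 [a,b] (by simp), h, h0 [b, a] (by simp)]
    | a :: b :: c :: e :: t =>
        have hl : (a :: b :: c :: e :: t : Word d).length ≠ 3 := by
          simp only [List.length_cons]; omega
        have h := h0 ((a :: b :: c :: e :: t).rotate
          ((a :: b :: c :: e :: t).length - 1)) (by rw [hlen]; exact hl)
        simp only [brMap, Pi.zero_apply]
        rw [h0 _ hl]
        have heq : (a :: b :: c :: e :: t : Word d).length - 1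
            = t.length + 1 + 1 + 1 := by simp only [List.length_cons]; omega
        rw [heq] at h
        simp [h]
        exact h0 _ (by simp)

end Paper
end
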